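/- If M is a k-PMP Hermitian matrix with 2 ≤ k ≤ N, written in block form M = [[A, B],[B*, C]] with A of size (k−1)×(k−1), then every column of B lies in the column space of A. -/

import Mathlib

open Matrix
open scoped ComplexOrder

/-- A Hermitian matrix is `k`-PMP if all its principal minors of size at most `k`
are non-negative. -/
def kPMP {N : ℕ} (k : ℕ) (A : Matrix (Fin N) (Fin N) ℂ) : Prop :=
  ∀ S : Finset (Fin N), S.card ≤ k →
    0 ≤ (A.submatrix (fun i : S => (i : Fin N)) (fun i : S => (i : Fin N))).det

section Aux

variable {n : Type*} [Fintype n] [DecidableEq n]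

lemma aux_det_piecewise_one (P : Matrix n n ℂ) (s : Finset n) :
    (Matrix.of (s.piecewise P (1 : Matrix n n ℂ))).det
      = (P.submatrix ((↑) : s → n) ((↑) : s → n)).det := by
  rw [← Matrix.det_submatrix_equiv_self (Equiv.sumCompl (· ∈ s))
      (Matrix.of (s.piecewise P (1 : Matrix n n ℂ)))]
  have heq : ((Matrix.of (s.piecewise P (1 : Matrix n n ℂ))).submatrix (Equiv.sumCompl (· ∈ s))
      (Equiv.sumCompl (· ∈ s)))
      = fromBlocks (P.submatrix ((↑) : s → n) ((↑) : s → n))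
          (P.submatrix ((↑) : s → n) ((↑) : {x // x ∉ s} → n)) 0 1 := by
    ext i j
    rcases i with a | a <;> rcases j with b | b
    · simp [Finset.piecewise, a.2, fromBlocks]
    · simp [Finset.piecewise, a.2, fromBlocks]
    · have hab : (a : n) ≠ (b : n) := fun h => a.2 (h ▸ b.2)
      simp [Finset.piecewise, a.2, fromBlocks, Matrix.one_apply, Matrix.one_apply_eq, hab]
    · by_cases hab : a = b
      · subst hab
        simp [Finset.piecewise, a.2, fromBlocks, Matrix.one_apply]
      · have hab' : (a : n) ≠ (b : n) := fun h => hab (Subtype.ext h)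
        simp [Finset.piecewise, a.2, fromBlocks, Matrix.one_apply, hab, hab']
  rw [heq, Matrix.det_fromBlocks_zero₂₁, Matrix.det_one, mul_one]

lemma aux_det_add_smul_one (P : Matrix n n ℂ) (t : ℂ) :
    (P + t • (1 : Matrix n n ℂ)).det
      = ∑ s : Finset n, t ^ (Fintype.card n - s.card)
          * (Matrix.of (s.piecewise P (1 : Matrix n n ℂ))).det := by
  have h1 := (Matrix.detRowAlternating (R := ℂ) (n := n)).toMultilinearMap.map_add_univ
    (P : n → n → ℂ) (t • (1 : Matrix n n ℂ) : n → n → ℂ)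
  have key : ∀ s : Finset n,
      (Matrix.detRowAlternating (R := ℂ) (n := n)).toMultilinearMap
        (s.piecewise (P : n → n → ℂ) (t • (1 : Matrix n n ℂ) : n → n → ℂ))
      = t ^ (Fintype.card n - s.card)
          * (Matrix.of (s.piecewise P (1 : Matrix n n ℂ))).det := by
    intro s
    have h2 : s.piecewise (P : n → n → ℂ) (t • (1 : Matrix n n ℂ))
        = sᶜ.piecewise (fun i => t • (Matrix.of (s.piecewise P (1 : Matrix n n ℂ))) i)
            (Matrix.of (s.piecewise P (1 : Matrix n n ℂ))) := by
      funext i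
      by_cases hi : i ∈ s
      · erw [Finset.piecewise_eq_of_mem _ _ _ hi,
          Finset.piecewise_eq_of_notMem _ _ _ (by simp [Finset.mem_compl, hi])]
        exact (Finset.piecewise_eq_of_mem _ _ _ hi).symm
      · erw [Finset.piecewise_eq_of_notMem _ _ _ hi,
          Finset.piecewise_eq_of_mem _ _ _ (Finset.mem_compl.mpr hi)]
        show (t • (1 : Matrix n n ℂ)) i = t • (s.piecewise (P : n → n → ℂ) (1 : Matrix n n ℂ)) i
        erw [Finset.piecewise_eq_of_notMem _ _ _ hi]
        rfl
    rw [h2, (Matrix.detRowAlternating (R := ℂ) (n := n)).toMultilinearMap.map_piecewise_smul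
      (fun _ : n => t) (Matrix.of (s.piecewise P (1 : Matrix n n ℂ)) : n → n → ℂ) sᶜ,
      Finset.prod_const, Finset.card_compl]
    rfl
  exact h1.trans (Finset.sum_congr rfl fun s _ => key s)

lemma aux_psd (P : Matrix n n ℂ) (hP : P.IsHermitian)
    (h : ∀ s : Finset n, 0 ≤ (P.submatrix ((↑) : s → n) ((↑) : s → n)).det) :
    P.PosSemidef := by
  apply hP.posSemidef_iff_eigenvalues_nonneg.mpr
  simp only [Pi.le_def, Pi.zero_apply]
  intro i
  by_contra hneg
  push_neg at hneg
  set μ : ℝ := hP.eigenvalues i with hμ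
  set t : ℝ := -μ with ht
  have ht0 : 0 < t := by simp [ht]; linarith
  -- the matrix P + t • 1 is singular
  have hdet0 : (P + (t : ℂ) • (1 : Matrix n n ℂ)).det = 0 := by
    rw [← Matrix.exists_mulVec_eq_zero_iff]
    refine ⟨⇑(hP.eigenvectorBasis i), ?_, ?_⟩
    · simpa using hP.eigenvectorBasis.orthonormal.ne_zero i
    · rw [Matrix.add_mulVec, Matrix.smul_mulVec, Matrix.one_mulVec,
        hP.mulVec_eigenvectorBasis]
      have : (t : ℂ) • ⇑(hP.eigenvectorBasis i) = t • ⇑(hP.eigenvectorBasis i) := by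
        funext x
        simp [Complex.real_smul]
      rw [this, ← add_smul]
      simp [ht, hμ]
  -- but its determinant is positive
  have hpos : 0 < (P + (t : ℂ) • (1 : Matrix n n ℂ)).det := by
    rw [aux_det_add_smul_one]
    apply Finset.sum_pos'
    · intro s _
      rw [aux_det_piecewise_one]
      exact mul_nonneg (pow_nonneg (Complex.zero_le_real.mpr ht0.le) _) (h s)
    · refine ⟨∅, Finset.mem_univ _, ?_⟩
      rw [aux_det_piecewise_one]
      have : (P.submatrix ((↑) : (∅ : Finset n) → n) ((↑) : (∅ : Finset n) → n)).det = 1 :=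
        Matrix.det_isEmpty
      rw [this, mul_one]
      exact pow_pos (Complex.zero_lt_real.mpr ht0) _
  rw [hdet0] at hpos
  exact lt_irrefl 0 hpos

lemma aux_range {m p : Type*} [Fintype m] [Fintype p] [DecidableEq m] [DecidableEq p]
    (C : Matrix m p ℂ) :
    LinearMap.range (Cᴴ).mulVecLin = LinearMap.range (Cᴴ * C).mulVecLin := by
  have hle : LinearMap.range (Cᴴ * C).mulVecLin ≤ LinearMap.range (Cᴴ).mulVecLin := by
    rintro x ⟨y, rfl⟩
    exact ⟨C *ᵥ y, by simp [Matrix.mulVecLin_mul]⟩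
  refine (Submodule.eq_of_le_of_finrank_le hle ?_).symm
  have h1 : Module.finrank ℂ (LinearMap.range (Cᴴ).mulVecLin) = Cᴴ.rank := rfl
  have h2 : Module.finrank ℂ (LinearMap.range (Cᴴ * C).mulVecLin) = (Cᴴ * C).rank := rfl
  rw [h1, h2, Matrix.rank_conjTranspose_mul_self, Matrix.rank_conjTranspose]

lemma aux_sub {m : Type*} [Fintype m] [DecidableEq m] {N : ℕ}
    (M : Matrix (Fin N) (Fin N) ℂ) (f : m → Fin N) (hf : Function.Injective f)
    (S : Finset m) :
    ((M.submatrix f f).submatrix ((↑) : S → m) ((↑) : S → m)).det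
      = (M.submatrix ((↑) : (S.map ⟨f, hf⟩ : Finset (Fin N)) → Fin N)
          ((↑) : (S.map ⟨f, hf⟩ : Finset (Fin N)) → Fin N)).det := by
  have hbij : Function.Bijective
      (fun x : S => (⟨f x, Finset.mem_map_of_mem _ x.2⟩ : (S.map ⟨f, hf⟩ : Finset (Fin N)))) := by
    constructor
    · intro a b hab
      exact Subtype.ext (hf (congrArg Subtype.val hab))
    · rintro ⟨y, hy⟩
      obtain ⟨x, hx, rfl⟩ := Finset.mem_map.mp hy
      exact ⟨⟨x, hx⟩, rfl⟩
  set e := Equiv.ofBijective _ hbij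
  rw [← Matrix.det_submatrix_equiv_self e
    (M.submatrix ((↑) : (S.map ⟨f, hf⟩ : Finset (Fin N)) → Fin N) (↑))]
  rfl

end Aux

/-- If `M` is a `k`-PMP Hermitian matrix (`2 ≤ k ≤ N`), written in block form
`M = [[A, B], [B*, C]]` with `A` the leading `(k−1) × (k−1)` principal submatrix,
then every column of `B` lies in the column space of `A`. -/
theorem stmt6 {N k : ℕ} (hk : 2 ≤ k) (hkN : k ≤ N)
    (M : Matrix (Fin N) (Fin N) ℂ) (hM : M.IsHermitian) (hpmp : kPMP k M)
    (j : Fin N) (hj : k - 1 ≤ (j : ℕ)) :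
    (fun i : {i : Fin N // (i : ℕ) < k - 1} => M (i : Fin N) j) ∈
      Submodule.span ℂ (Set.range fun j' : {i : Fin N // (i : ℕ) < k - 1} =>
        fun i : {i : Fin N // (i : ℕ) < k - 1} => M (i : Fin N) (j' : Fin N)) := by
  classical
  set I := {i : Fin N // (i : ℕ) < k - 1} with hI
  let f : I ⊕ Unit → Fin N := Sum.elim (fun i => (i : Fin N)) (fun _ => j)
  have hf : Function.Injective f := by
    rintro (a | a) (b | b) hab
    · exact congrArg Sum.inl (Subtype.ext hab)
    · exfalso
      have h3 : ((a : Fin N) : ℕ) = (j : ℕ) := congrArg Fin.val hab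
      have h2 := a.2
      omega
    · exfalso
      have h3 : (j : ℕ) = ((b : Fin N) : ℕ) := congrArg Fin.val hab
      have h2 := b.2
      omega
    · simp
  have hcardI : Fintype.card I = k - 1 := by
    have e2 : I ≃ Fin (k - 1) :=
      ⟨fun i => ⟨i.1, i.2⟩,
       fun x => ⟨⟨x.1, lt_of_lt_of_le x.2 (le_trans (Nat.sub_le k 1) hkN)⟩, x.2⟩,
       fun i => rfl, fun x => rfl⟩
    simp [Fintype.card_congr e2]
  let P := M.submatrix f f
  have hPh : P.IsHermitian := hM.submatrix f
  have hminors : ∀ s : Finset (I ⊕ Unit),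
      0 ≤ (P.submatrix ((↑) : s → (I ⊕ Unit)) ((↑) : s → (I ⊕ Unit))).det := by
    intro s
    rw [aux_sub M f hf s]
    apply hpmp
    rw [Finset.card_map]
    calc s.card ≤ Fintype.card (I ⊕ Unit) := Finset.card_le_univ s
      _ = k := by
        rw [Fintype.card_sum, hcardI, Fintype.card_unit]
        omega
  have hpsd : P.PosSemidef := aux_psd P hPh hminors
  obtain ⟨B, hB⟩ : ∃ B : Matrix (I ⊕ Unit) (I ⊕ Unit) ℂ, P = Bᴴ * B := by
    open scoped MatrixOrder in
    obtain ⟨X, hX, -, hXX⟩ := CFC.exists_sqrt_of_isSelfAdjoint_of_quasispectrumRestricts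
      hpsd.isHermitian (QuasispectrumRestricts.nnreal_of_nonneg hpsd.nonneg)
    exact ⟨X, by rw [← Matrix.star_eq_conjTranspose, hX.star_eq, hXX]⟩
  let C : Matrix (I ⊕ Unit) I ℂ := Matrix.of fun r i => B r (Sum.inl i)
  let β : (I ⊕ Unit) → ℂ := fun r => B r (Sum.inr ())
  let A : Matrix I I ℂ := Matrix.of fun i i' => M i.1 i'.1
  have hA : A = Cᴴ * C := by
    ext i i'
    have h1 := congrFun (congrFun hB (Sum.inl i)) (Sum.inl i')
    simpa [P, f, Matrix.mul_apply, Matrix.conjTranspose_apply, A, C] using h1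
  have hb : (fun i : I => M i.1 j) = Cᴴ *ᵥ β := by
    funext i
    have h1 := congrFun (congrFun hB (Sum.inl i)) (Sum.inr ())
    simpa [P, f, Matrix.mul_apply, Matrix.mulVec, dotProduct,
      Matrix.conjTranspose_apply, C, β] using h1
  have hmem : (fun i : I => M i.1 j) ∈ LinearMap.range A.mulVecLin := by
    rw [hA, ← aux_range C, hb]
    exact ⟨β, rfl⟩
  rw [Matrix.range_mulVecLin] at hmem
  exact hmem
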